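/- (Deterministic stratified fragmentation, fast increments case.) Suppose p_{n,k} = p_n for all 1 ≤ k ≤ n, where (p_n)_{n≥1} is a sequence in [0,1] with (1/n) Σ_{k=1}^n p_k → p̄ as n → ∞. Assume there exists a nondecreasing function L : [0,∞) → [0,∞) with L(n) = l_n for all n ∈ ℕ such that, as t → ∞, L(tx)/L(t) → 0 for every 0 < x < 1 and L(tx)/L(t) → ∞ for every x > 1 (c = ∞), and that q_n → q ∈ [0,1]. Then the empirical measures g_n converge weakly on [0,1] to the Dirac mass δ_{1−q} as n → ∞. -/

import Mathlib

open MeasureTheory Filter Set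
open scoped ENNReal

lemma chain_mono (g : ℕ → ℝ) (N : ℕ) (hg : ∀ k, k < N → g k ≤ g (k + 1)) :
    ∀ j k, j ≤ k → k ≤ N → g j ≤ g k := by
  intro j k
  induction k with
  | zero =>
    intro hjk _
    have : j = 0 := by omega
    simp [this]
  | succ k ih =>
    intro hjk hk
    rcases Nat.lt_or_ge j (k + 1) with h | h
    · exact (ih (by omega) (by omega)).trans (hg k (by omega))
    · have : j = k + 1 := by omega
      simp [this]

/-- The empirical measure `g_n = (1/n) Σ_{k=1}^n δ_{α_{n,k}}` of the normalized break
points `α_{n,k} = (a_{n,k} - a_{n,0})/l_n`. -/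
noncomputable def empiricalMeasure (α : ℕ → ℕ → ℝ) (n : ℕ) : Measure ℝ :=
  ((n : ℝ≥0∞))⁻¹ • ∑ k ∈ Finset.Icc 1 n, Measure.dirac (α n k)

set_option maxHeartbeats 2000000 in
/-- **Deterministic stratified fragmentation, fast increments case (`c = ∞`).**
If `p_{n,k} = p_n` with Cesàro mean `p̄`, the interval lengths `l_n` have fast increments,
and `q_n → q`, then the empirical measures of the normalized break points converge weakly
to the Dirac mass `δ_{1-q}`. -/
theorem deterministic_stratified_fast_increments
    (p : ℕ → ℝ) (hp : ∀ n, p n ∈ Icc (0:ℝ) 1)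
    (a : ℕ → ℕ → ℝ)
    (ha_anti : Antitone fun n => a n 0)
    (ha_mono : Monotone fun n => a n (n + 1))
    (ha_pos : a 0 0 < a 0 1)
    (harec : ∀ n : ℕ, 1 ≤ n → ∀ k : ℕ, 1 ≤ k → k ≤ n →
      a n k = p n * a (n - 1) (k - 1) + (1 - p n) * a (n - 1) k)
    (l : ℕ → ℝ) (hl : ∀ n, l n = a n (n + 1) - a n 0)
    (qseq : ℕ → ℝ) (hq_mem : ∀ n, qseq n ∈ Icc (0:ℝ) 1)
    (hq_def : ∀ n : ℕ, 1 ≤ n → l (n - 1) < l n →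
      qseq n = (a n (n + 1) - a (n - 1) n) / (l n - l (n - 1)))
    (pbar : ℝ)
    (hcesaro : Tendsto (fun n : ℕ => (∑ k ∈ Finset.Icc 1 n, p k) / n) atTop (nhds pbar))
    (L : ℝ → ℝ) (hL_nonneg : ∀ x : ℝ, 0 ≤ x → 0 ≤ L x)
    (hL_mono : MonotoneOn L (Ici (0:ℝ)))
    (hL_interp : ∀ n : ℕ, L n = l n)
    (hL_fast_lt : ∀ x : ℝ, 0 < x → x < 1 →
      Tendsto (fun t : ℝ => L (t * x) / L t) atTop (nhds 0))
    (hL_fast_gt : ∀ x : ℝ, 1 < x →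
      Tendsto (fun t : ℝ => L (t * x) / L t) atTop atTop)
    (q : ℝ) (hq_lim : Tendsto qseq atTop (nhds q))
    (α : ℕ → ℕ → ℝ) (hα : ∀ n k, α n k = (a n k - a n 0) / l n) :
    ∀ f : BoundedContinuousFunction ℝ ℝ,
      Tendsto (fun n : ℕ => ∫ x, f x ∂(empiricalMeasure α n)) atTop
        (nhds (∫ x, f x ∂(Measure.dirac (1 - q)))) := by
  -- basic facts about `l`
  have hl_mono : Monotone l := by
    intro m n hmn
    have h1 := ha_mono hmn
    have h2 := ha_anti hmn
    simp only at h1 h2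
    rw [hl, hl]
    linarith
  have hl_pos : ∀ n, 0 < l n := by
    intro n
    have h0 : 0 < l 0 := by rw [hl]; simpa using sub_pos.2 ha_pos
    exact h0.trans_le (hl_mono (Nat.zero_le n))
  -- monotonicity of the break points in `k`
  have hadj : ∀ n, ∀ k, k ≤ n → a n k ≤ a n (k + 1) := by
    intro n
    induction n with
    | zero =>
      intro k hk
      interval_cases k
      exact ha_pos.le
    | succ n ih =>
      have hmn : ∀ j k, j ≤ k → k ≤ n + 1 → a n j ≤ a n k :=
        chain_mono (a n) (n + 1) (fun k hk => ih k (by omega))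
      intro k hk
      have hpb := hp (n + 1)
      simp only [mem_Icc] at hpb
      rcases Nat.eq_zero_or_pos k with rfl | hk1
      · have h0 : a (n + 1) 0 ≤ a n 0 := ha_anti (Nat.le_succ n)
        have h1 : a (n + 1) 1 = p (n + 1) * a n 0 + (1 - p (n + 1)) * a n 1 := by
          have h := harec (n + 1) (by omega) 1 le_rfl (by omega)
          simpa using h
        have h01 : a n 0 ≤ a n 1 := hmn 0 1 (by omega) (by omega)
        nlinarith
      · rcases Nat.lt_or_ge k (n + 1) with hkn | hkn
        · have hrk := harec (n + 1) (by omega) k (by omega) (by omega)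
          have hrk1 := harec (n + 1) (by omega) (k + 1) (by omega) (by omega)
          simp only [Nat.add_sub_cancel] at hrk hrk1
          have hm1 : a n (k - 1) ≤ a n k := hmn (k - 1) k (by omega) (by omega)
          have hm2 : a n k ≤ a n (k + 1) := hmn k (k + 1) (by omega) (by omega)
          have hle : a (n + 1) k ≤ a n k := by rw [hrk]; nlinarith
          have hge : a n k ≤ a (n + 1) (k + 1) := by
            rw [hrk1]
            nlinarith
          linarith
        · have hkeq : k = n + 1 := by omega
          subst hkeq
          have hr := harec (n + 1) (by omega) (n + 1) (by omega) le_rfl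
          simp only [Nat.add_sub_cancel] at hr
          have hm1 : a n n ≤ a n (n + 1) := hmn n (n + 1) (by omega) (by omega)
          have hmn2 : a (n + 1) (n + 2) ≥ a n (n + 1) := ha_mono (Nat.le_succ n)
          have : a (n + 1) (n + 1) ≤ a n (n + 1) := by rw [hr]; nlinarith
          linarith
  have hmono : ∀ n j k, j ≤ k → k ≤ n + 1 → a n j ≤ a n k := fun n =>
    chain_mono (a n) (n + 1) (fun k hk => hadj n k (by omega))
  -- interior break points at level `n` stay in the level-`m` interval
  have hrange : ∀ m n, m ≤ n → ∀ k, n - m ≤ k → k ≤ m + 1 →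
      a m 0 ≤ a n k ∧ a n k ≤ a m (m + 1) := by
    intro m n hmn
    induction n, hmn using Nat.le_induction with
    | base =>
      intro k _ hk2
      exact ⟨hmono m 0 k (by omega) hk2, hmono m k (m + 1) hk2 le_rfl⟩
    | succ n hmn ih =>
      intro k hk1 hk2
      have hk0 : 1 ≤ k := by omega
      have hr := harec (n + 1) (by omega) k hk0 (by omega)
      simp only [Nat.add_sub_cancel] at hr
      have ih1 := ih (k - 1) (by omega) (by omega)
      have ih2 := ih k (by omega) hk2
      have hpb := hp (n + 1)
      simp only [mem_Icc] at hpb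
      constructor
      · rw [hr]; nlinarith [ih1.1, ih2.1]
      · rw [hr]; nlinarith [ih1.2, ih2.2]
  -- one-step identities for the endpoint increments
  have hqstep : ∀ j : ℕ,
      a (j + 1) (j + 2) - a j (j + 1) = qseq (j + 1) * (l (j + 1) - l j) ∧
      a j 0 - a (j + 1) 0 = (1 - qseq (j + 1)) * (l (j + 1) - l j) := by
    intro j
    have h1 : (0:ℝ) ≤ a (j + 1) (j + 2) - a j (j + 1) :=
      sub_nonneg.2 (ha_mono (Nat.le_succ j))
    have h2 : (0:ℝ) ≤ a j 0 - a (j + 1) 0 := sub_nonneg.2 (ha_anti (Nat.le_succ j))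
    have hsum : (a (j + 1) (j + 2) - a j (j + 1)) + (a j 0 - a (j + 1) 0)
        = l (j + 1) - l j := by
      rw [hl, hl]; ring
    rcases lt_or_eq_of_le (hl_mono (Nat.le_succ j)) with hlt | heq
    · have hqd := hq_def (j + 1) (by omega) (by simpa using hlt)
      simp only [Nat.add_sub_cancel] at hqd
      have hne : l (j + 1) - l j ≠ 0 := by linarith
      constructor
      · rw [hqd, div_mul_cancel₀ _ hne]
      · rw [hqd]
        field_simp
        linarith
    · have heq' : l (j + 1) - l j = 0 := by
        have : l (j + 1) = l j := heq.symm
        linarith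
      have e1 : a (j + 1) (j + 2) - a j (j + 1) = 0 := by
        rw [heq'] at hsum; linarith
      have e2 : a j 0 - a (j + 1) 0 = 0 := by
        rw [heq'] at hsum; linarith
      exact ⟨by rw [e1, heq']; ring, by rw [e2, heq']; ring⟩
  -- telescoping identities
  have htel : ∀ m n, m ≤ n →
      a n (n + 1) - a m (m + 1) = ∑ i ∈ Finset.Icc (m + 1) n, qseq i * (l i - l (i - 1)) ∧
      a m 0 - a n 0 = ∑ i ∈ Finset.Icc (m + 1) n, (1 - qseq i) * (l i - l (i - 1)) ∧
      l n - l m = ∑ i ∈ Finset.Icc (m + 1) n, (l i - l (i - 1)) := by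
    intro m n hmn
    induction n, hmn using Nat.le_induction with
    | base => simp
    | succ n hmn ih =>
      rw [Finset.sum_Icc_succ_top (by omega), Finset.sum_Icc_succ_top (by omega),
        Finset.sum_Icc_succ_top (by omega)]
      obtain ⟨t1, t2, t3⟩ := ih
      have hs := hqstep n
      simp only [Nat.add_sub_cancel]
      refine ⟨?_, ?_, ?_⟩ <;> linarith [hs.1, hs.2]
  have hq0 : 0 ≤ q := ge_of_tendsto' hq_lim fun n => (hq_mem n).1
  have hq1 : q ≤ 1 := le_of_tendsto' hq_lim fun n => (hq_mem n).2
  -- the key quantitative estimate for "good" indices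
  have hkey : ∀ ε₁ : ℝ, 0 < ε₁ → ∀ N₁ : ℕ, (∀ i, N₁ ≤ i → |qseq i - q| ≤ ε₁) →
      ∀ m n k : ℕ, N₁ ≤ m → m ≤ n → n - m ≤ k → k ≤ m + 1 →
      |α n k - (1 - q)| ≤ ε₁ + l m / l n := by
    intro ε₁ hε₁ N₁ hN₁ m n k hNm hmn hk1 hk2
    obtain ⟨hlow, hup⟩ := hrange m n hmn k hk1 hk2
    obtain ⟨t1, t2, t3⟩ := htel m n hmn
    have hln := hl_pos n
    have hlm := hl_pos m
    have hlmn : l m ≤ l n := hl_mono hmn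
    have hSl : (q - ε₁) * (l n - l m) ≤ a n (n + 1) - a m (m + 1) := by
      rw [t1, t3, Finset.mul_sum]
      apply Finset.sum_le_sum
      intro i hi
      simp only [Finset.mem_Icc] at hi
      have hqi := hN₁ i (by omega)
      rw [abs_sub_le_iff] at hqi
      have hΔ : (0:ℝ) ≤ l i - l (i - 1) := sub_nonneg.2 (hl_mono (by omega))
      nlinarith [hqi.2]
    have hTl : (1 - q - ε₁) * (l n - l m) ≤ a m 0 - a n 0 := by
      rw [t2, t3, Finset.mul_sum]
      apply Finset.sum_le_sum
      intro i hi
      simp only [Finset.mem_Icc] at hi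
      have hqi := hN₁ i (by omega)
      rw [abs_sub_le_iff] at hqi
      have hΔ : (0:ℝ) ≤ l i - l (i - 1) := sub_nonneg.2 (hl_mono (by omega))
      nlinarith [hqi.1]
    have hln_eq : l n = a n (n + 1) - a n 0 := hl n
    have hup' : a n k - a n 0 ≤ (1 - q) * l n + ε₁ * l n + l m := by
      nlinarith [mul_nonneg (by linarith : (0:ℝ) ≤ 1 - q + ε₁) hlm.le]
    have hlow' : (1 - q) * l n - ε₁ * l n - l m ≤ a n k - a n 0 := by
      nlinarith [mul_nonneg (by linarith : (0:ℝ) ≤ q + ε₁) hlm.le]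
    have hre1 : ((1 - q) * l n + ε₁ * l n + l m) / l n = (1 - q) + ε₁ + l m / l n := by
      field_simp
    have hre2 : ((1 - q) * l n - ε₁ * l n - l m) / l n = (1 - q) - ε₁ - l m / l n := by
      field_simp
    have hd1 : (a n k - a n 0) / l n ≤ (1 - q) + ε₁ + l m / l n := by
      rw [← hre1]
      exact (div_le_div_iff_of_pos_right hln).2 hup'
    have hd2 : (1 - q) - ε₁ - l m / l n ≤ (a n k - a n 0) / l n := by
      rw [← hre2]
      exact (div_le_div_iff_of_pos_right hln).2 hlow'
    rw [hα, abs_sub_le_iff]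
    constructor <;> linarith
  -- the integral against the empirical measure is an average
  intro f
  have hint : ∀ n : ℕ, ∫ x, f x ∂(empiricalMeasure α n)
      = (n : ℝ)⁻¹ * ∑ k ∈ Finset.Icc 1 n, f (α n k) := by
    intro n
    rw [empiricalMeasure, integral_smul_measure, integral_finset_sum_measure]
    · simp [integral_dirac, ENNReal.toReal_inv]
    · intro k _
      exact f.integrable _
  have hrhs : ∫ x, f x ∂(Measure.dirac (1 - q)) = f (1 - q) := integral_dirac _ _
  rw [hrhs]
  have hfun : ∀ n : ℕ, (fun n : ℕ => ∫ x, f x ∂(empiricalMeasure α n)) n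
      = (n : ℝ)⁻¹ * ∑ k ∈ Finset.Icc 1 n, f (α n k) := hint
  rw [tendsto_congr hfun]
  have hC : ∀ x, |f x| ≤ ‖f‖ := fun x => f.norm_coe_le_norm x
  set C := ‖f‖ with hCdef
  have hC0 : (0:ℝ) ≤ C := norm_nonneg f
  rw [Metric.tendsto_atTop]
  intro ε hε
  -- continuity of f at 1 - q
  obtain ⟨δ₀, hδ₀, hcont⟩ :=
    Metric.continuousAt_iff.1 (f.continuous.continuousAt (x := 1 - q)) (ε / 2) (by positivity)
  set ε₁ : ℝ := δ₀ / 4 with hε₁def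
  have hε₁ : 0 < ε₁ := by positivity
  obtain ⟨N₁, hN₁⟩ := Metric.tendsto_atTop.1 hq_lim ε₁ hε₁
  have hN₁' : ∀ i, N₁ ≤ i → |qseq i - q| ≤ ε₁ := by
    intro i hi
    have := hN₁ i hi
    rw [Real.dist_eq] at this
    exact this.le
  obtain ⟨ε₂, hε₂0, hε₂half, hε₂r⟩ :
      ∃ e : ℝ, 0 < e ∧ e ≤ 1 / 2 ∧ e ≤ ε / (16 * (C + 1)) :=
    ⟨min (1 / 2) (ε / (16 * (C + 1))),
      lt_min (by norm_num) (by positivity), min_le_left _ _, min_le_right _ _⟩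
  set x : ℝ := 1 - ε₂ with hxdef
  have hx0 : 0 < x := by simp only [hxdef]; linarith
  have hx1 : x < 1 := by simp only [hxdef]; linarith
  -- the eventual conditions
  have hE2 : ∀ᶠ n : ℕ in atTop, L ((n : ℝ) * x) / L n < δ₀ / 4 :=
    ((hL_fast_lt x hx0 hx1).comp (tendsto_natCast_atTop_atTop (R := ℝ))).eventually_lt_const
      (by positivity)
  have hE3 : ∀ᶠ n : ℕ in atTop, (N₁ : ℝ) ≤ (n : ℝ) * x :=
    ((tendsto_natCast_atTop_atTop (R := ℝ)).atTop_mul_const hx0).eventually_ge_atTop _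
  have hE4 : ∀ᶠ n : ℕ in atTop, 4 * C / (n : ℝ) < ε / 8 :=
    (tendsto_const_div_atTop_nhds_zero_nat (4 * C)).eventually_lt_const (by positivity)
  have hE5 : ∀ᶠ n : ℕ in atTop, 1 ≤ n := eventually_ge_atTop 1
  obtain ⟨N, hN⟩ := (hE2.and (hE3.and (hE4.and hE5))).exists_forall_of_atTop
  refine ⟨N, fun n hn => ?_⟩
  obtain ⟨h2, h3, h4, h5⟩ := hN n hn
  -- set up m
  have hnR : (0:ℝ) < n := by
    have : (1:ℝ) ≤ n := by exact_mod_cast h5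
    linarith
  have hnx_nonneg : (0:ℝ) ≤ (n : ℝ) * x := by positivity
  obtain ⟨m, hmx, hxm⟩ : ∃ m : ℕ, (m : ℝ) ≤ (n : ℝ) * x ∧ (n : ℝ) * x < m + 1 :=
    ⟨⌊(n : ℝ) * x⌋₊, Nat.floor_le hnx_nonneg, Nat.lt_floor_add_one _⟩
  have hmn : m ≤ n := by
    have h' : (n : ℝ) * x ≤ (n : ℝ) := mul_le_of_le_one_right hnR.le hx1.le
    exact_mod_cast Nat.cast_le.mp (hmx.trans h')
  have hNm : N₁ ≤ m := by
    have : (N₁ : ℝ) < (m : ℝ) + 1 := lt_of_le_of_lt h3 hxm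
    exact_mod_cast Nat.lt_succ_iff.mp (by exact_mod_cast this)
  have hLn_pos : 0 < L n := by rw [hL_interp]; exact hl_pos n
  have hlm_ln : l m / l n ≤ L ((n : ℝ) * x) / L n := by
    rw [← hL_interp m, ← hL_interp n]
    exact (div_le_div_iff_of_pos_right hLn_pos).2
      (hL_mono (mem_Ici.2 (Nat.cast_nonneg m)) (mem_Ici.2 hnx_nonneg) hmx)
  have hη : l m / l n < δ₀ / 4 := lt_of_le_of_lt hlm_ln h2
  -- pointwise bounds on the summands
  have hterm : ∀ k ∈ Finset.Icc 1 n, |f (α n k) - f (1 - q)| ≤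
      if n - m ≤ k ∧ k ≤ m + 1 then ε / 2 else 2 * C := by
    intro k hk
    split_ifs with hgood
    · have hb := hkey ε₁ hε₁ N₁ hN₁' m n k hNm hmn hgood.1 hgood.2
      have hd : |α n k - (1 - q)| < δ₀ := by
        simp only [hε₁def] at hb
        linarith
      have := hcont (x := α n k) (by rw [Real.dist_eq]; exact hd)
      rw [Real.dist_eq] at this
      exact this.le
    · calc |f (α n k) - f (1 - q)| ≤ |f (α n k)| + |f (1 - q)| := abs_sub _ _
        _ ≤ C + C := add_le_add (hC _) (hC _)
        _ = 2 * C := by ring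
  -- counting the bad indices
  have hbadsub : (Finset.Icc 1 n).filter (fun k => ¬(n - m ≤ k ∧ k ≤ m + 1)) ⊆
      Finset.Ico 1 (n - m) ∪ Finset.Icc (m + 2) n := by
    intro k hk
    simp only [Finset.mem_filter, Finset.mem_Icc] at hk
    simp only [Finset.mem_union, Finset.mem_Ico, Finset.mem_Icc]
    omega
  have hbadcard : ((Finset.Icc 1 n).filter (fun k => ¬(n - m ≤ k ∧ k ≤ m + 1))).card
      ≤ 2 * (n - m) := by
    have h' := (Finset.card_le_card hbadsub).trans (Finset.card_union_le _ _)
    rw [Nat.card_Ico, Nat.card_Icc] at h'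
    omega
  have hcardIcc : (Finset.Icc 1 n).card = n := by
    rw [Nat.card_Icc]
    omega
  -- sum estimate
  have hsumabs : |∑ k ∈ Finset.Icc 1 n, (f (α n k) - f (1 - q))|
      ≤ (n : ℝ) * (ε / 2) + (2 * (n - m) : ℕ) * (2 * C) := by
    calc |∑ k ∈ Finset.Icc 1 n, (f (α n k) - f (1 - q))|
        ≤ ∑ k ∈ Finset.Icc 1 n, |f (α n k) - f (1 - q)| :=
          Finset.abs_sum_le_sum_abs _ _
      _ ≤ ∑ k ∈ Finset.Icc 1 n, (if n - m ≤ k ∧ k ≤ m + 1 then ε / 2 else 2 * C) :=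
          Finset.sum_le_sum hterm
      _ ≤ (n : ℝ) * (ε / 2) + (2 * (n - m) : ℕ) * (2 * C) := by
          rw [Finset.sum_ite, Finset.sum_const, Finset.sum_const, nsmul_eq_mul, nsmul_eq_mul]
          have hc1 : (((Finset.Icc 1 n).filter (fun k => n - m ≤ k ∧ k ≤ m + 1)).card : ℝ)
              ≤ (n : ℝ) := by
            exact_mod_cast (Finset.card_filter_le _ _).trans_eq hcardIcc
          have hc2 : (((Finset.Icc 1 n).filter (fun k => ¬(n - m ≤ k ∧ k ≤ m + 1))).card : ℝ)
              ≤ ((2 * (n - m) : ℕ) : ℝ) := by exact_mod_cast hbadcard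
          have hεpos : (0:ℝ) ≤ ε / 2 := by linarith
          have h2C : (0:ℝ) ≤ 2 * C := by linarith
          gcongr
  -- the floor bound
  have hfloor : ((n : ℝ) - m) ≤ (n : ℝ) * ε₂ + 1 := by
    have hxm' := hxm
    rw [hxdef] at hxm'
    have hexp : (n : ℝ) * (1 - ε₂) = (n : ℝ) - (n : ℝ) * ε₂ := by ring
    linarith
  have hnm_cast : ((2 * (n - m) : ℕ) : ℝ) = 2 * ((n : ℝ) - (m : ℝ)) := by
    push_cast [Nat.cast_sub hmn]
    ring
  -- final computation
  rw [Real.dist_eq]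
  have havg : (n : ℝ)⁻¹ * (∑ k ∈ Finset.Icc 1 n, f (α n k)) - f (1 - q)
      = (n : ℝ)⁻¹ * ∑ k ∈ Finset.Icc 1 n, (f (α n k) - f (1 - q)) := by
    rw [Finset.sum_sub_distrib, Finset.sum_const, hcardIcc, nsmul_eq_mul]
    field_simp
  rw [havg, abs_mul, abs_inv, Nat.abs_cast]
  have hB : |∑ k ∈ Finset.Icc 1 n, (f (α n k) - f (1 - q))|
      ≤ (n : ℝ) * (ε / 2) + ((n : ℝ) * ε₂ + 1) * (4 * C) := by
    have hprod : ((n : ℝ) - (m : ℝ)) * (4 * C) ≤ ((n : ℝ) * ε₂ + 1) * (4 * C) :=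
      mul_le_mul_of_nonneg_right hfloor (by linarith)
    have hring : 2 * ((n : ℝ) - (m : ℝ)) * (2 * C) = ((n : ℝ) - (m : ℝ)) * (4 * C) := by ring
    have h' : ((2 * (n - m) : ℕ) : ℝ) * (2 * C) ≤ ((n : ℝ) * ε₂ + 1) * (4 * C) := by
      rw [hnm_cast, hring]
      exact hprod
    linarith [hsumabs]
  have hmain : (n : ℝ)⁻¹ * |∑ k ∈ Finset.Icc 1 n, (f (α n k) - f (1 - q))|
      ≤ ε / 2 + 4 * C * ε₂ + 4 * C / (n : ℝ) := by
    have heq : (n : ℝ)⁻¹ * ((n : ℝ) * (ε / 2) + ((n : ℝ) * ε₂ + 1) * (4 * C))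
        = ε / 2 + 4 * C * ε₂ + 4 * C / (n : ℝ) := by
      field_simp
      ring
    rw [← heq]
    exact mul_le_mul_of_nonneg_left hB (by positivity)
  have hε₂bound : 4 * C * ε₂ ≤ ε / 4 := by
    have h16 : (0:ℝ) < 16 * (C + 1) := by linarith
    have h'' : ε₂ * (16 * (C + 1)) ≤ ε := (le_div_iff₀ h16).1 hε₂r
    have hCe : (0:ℝ) ≤ C * ε₂ := mul_nonneg hC0 hε₂0.le
    nlinarith [hε₂0.le]
  calc (n : ℝ)⁻¹ * |∑ k ∈ Finset.Icc 1 n, (f (α n k) - f (1 - q))|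
      ≤ ε / 2 + 4 * C * ε₂ + 4 * C / (n : ℝ) := hmain
    _ < ε := by linarith
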